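/- Let x_0,…,x_n ∈ ℝ^n be affinely independent and positively oriented, i.e. det[x_1 − x_0, …, x_n − x_0] > 0, and let a ∈ ℝ^n be arbitrary. With v_j := x_j − a and B_i the n×n matrix with columns v_j for j ≠ i (in increasing order of j), let T_i denote the convex hull of {a} ∪ {x_k : k ≠ i} and let T denote the convex hull of {x_0,…,x_n}. Then for every Lebesgue-integrable f : ℝ^n → ℝ, Σ_{i=0}^n (−1)^i · sign(det B_i) · ∫_{T_i} f dx = ∫_T f dx. -/

import Mathlib

open MeasureTheory Finset

section Aux

open Finset

/-- exit existence: if the constraint system is satisfied at some `μ₀ ≥ 0`, there is an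
index `i` with positive `alp i` whose crossing time witnesses membership. -/
lemma exit_exists {n : ℕ} (lam alp : Fin (n+1) → ℝ)
    (halp : ∑ j, alp j = 1)
    (μ₀ : ℝ) (hμ₀ : 0 ≤ μ₀) (h₀ : ∀ j, μ₀ * alp j ≤ lam j) :
    ∃ i, 0 < alp i ∧ ∃ μ : ℝ, 0 ≤ μ ∧ lam i = μ * alp i ∧ ∀ j, μ * alp j ≤ lam j := by
  classical
  have hKne : ∃ k, 0 < alp k := by
    by_contra h
    push_neg at h
    have : (∑ j, alp j) ≤ 0 := Finset.sum_nonpos fun j _ => h j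
    linarith
  obtain ⟨k, hk⟩ := hKne
  have hKne' : (univ.filter (fun i => 0 < alp i)).Nonempty :=
    ⟨k, by simp [hk]⟩
  obtain ⟨i, hiK, hmin⟩ := Finset.exists_min_image _ (fun i => lam i / alp i) hKne'
  have hali : 0 < alp i := by simpa using (Finset.mem_filter.mp hiK).2
  set μ := lam i / alp i with hμdef
  have hμ₀le : μ₀ ≤ μ := by
    rw [hμdef, le_div_iff₀ hali]
    exact h₀ i
  refine ⟨i, hali, μ, le_trans hμ₀ hμ₀le, (div_mul_cancel₀ _ hali.ne').symm, ?_⟩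
  intro j
  rcases lt_trichotomy (alp j) 0 with hj | hj | hj
  · calc μ * alp j ≤ μ₀ * alp j := mul_le_mul_of_nonpos_right hμ₀le hj.le
      _ ≤ lam j := h₀ j
  · have := h₀ j
    simpa [hj] using this
  · have hjK : j ∈ univ.filter (fun i => 0 < alp i) := by simp [hj]
    have := hmin j hjK
    calc μ * alp j ≤ (lam j / alp j) * alp j := by
          exact mul_le_mul_of_nonneg_right this hj.le
      _ = lam j := div_mul_cancel₀ _ hj.ne'

/-- entry existence: if some coordinate is negative but the system is satisfied at
`μ⁺ ≥ 0`, then there is an entry index with negative `alp`. -/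
lemma entry_exists {n : ℕ} (lam alp : Fin (n+1) → ℝ)
    (h0 : ∀ j, lam j ≠ 0)
    (j₀ : Fin (n+1)) (hj₀ : lam j₀ < 0)
    (μp : ℝ) (hμp : 0 ≤ μp) (hp : ∀ j, μp * alp j ≤ lam j) :
    ∃ i, alp i < 0 ∧ ∃ μ : ℝ, 0 ≤ μ ∧ lam i = μ * alp i ∧ ∀ j, μ * alp j ≤ lam j := by
  classical
  have hneg : ∀ j, lam j < 0 → alp j < 0 := by
    intro j hj
    by_contra h
    push_neg at h
    have : 0 ≤ μp * alp j := mul_nonneg hμp h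
    linarith [hp j]
  have hKne' : (univ.filter (fun j => lam j < 0)).Nonempty := ⟨j₀, by simp [hj₀]⟩
  obtain ⟨i, hiK, hmax⟩ := Finset.exists_max_image _ (fun i => lam i / alp i) hKne'
  have hli : lam i < 0 := by simpa using (Finset.mem_filter.mp hiK).2
  have hali : alp i < 0 := hneg i hli
  set μ := lam i / alp i with hμdef
  have hμpos : 0 < μ := div_pos_of_neg_of_neg hli hali
  have hμle : μ ≤ μp := by
    have := hp i
    rw [hμdef]
    exact (div_le_iff_of_neg hali).mpr this
  refine ⟨i, hali, μ, hμpos.le, (div_mul_cancel₀ _ hali.ne).symm, ?_⟩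
  intro j
  by_cases hlj : lam j < 0
  · have hjK : j ∈ univ.filter (fun j => lam j < 0) := by simp [hlj]
    have hle := hmax j hjK
    have halj : alp j < 0 := hneg j hlj
    calc μ * alp j ≤ (lam j / alp j) * alp j :=
          mul_le_mul_of_nonpos_right hle halj.le
      _ = lam j := div_mul_cancel₀ _ halj.ne
  · push_neg at hlj
    have hlj' : 0 < lam j := lt_of_le_of_ne hlj (Ne.symm (h0 j))
    rcases le_or_gt (alp j) 0 with halj | halj
    · have : μ * alp j ≤ 0 := mul_nonpos_of_nonneg_of_nonpos hμpos.le halj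
      linarith
    · have h1 : μp ≤ lam j / alp j := (le_div_iff₀ halj).mpr (hp j)
      calc μ * alp j ≤ μp * alp j := mul_le_mul_of_nonneg_right hμle halj.le
        _ ≤ (lam j / alp j) * alp j := mul_le_mul_of_nonneg_right h1 halj.le
        _ = lam j := div_mul_cancel₀ _ halj.ne'

lemma exit_unique {n : ℕ} (lam alp : Fin (n+1) → ℝ)
    (hgen : ∀ i j, i ≠ j → alp i ≠ 0 → alp j ≠ 0 → lam i * alp j ≠ lam j * alp i)
    {i i' : Fin (n+1)} (hi : 0 < alp i) (hi' : 0 < alp i')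
    {μ μ' : ℝ}
    (h1 : lam i = μ * alp i) (h2 : ∀ j, μ * alp j ≤ lam j)
    (h1' : lam i' = μ' * alp i') (h2' : ∀ j, μ' * alp j ≤ lam j) :
    i = i' := by
  by_contra hne
  have e1 : μ * alp i' ≤ μ' * alp i' := by rw [← h1']; exact h2 i'
  have e2 : μ' * alp i ≤ μ * alp i := by rw [← h1]; exact h2' i
  have hμ1 : μ ≤ μ' := le_of_mul_le_mul_right (by linarith [e1]) hi'
  have hμ2 : μ' ≤ μ := le_of_mul_le_mul_right (by linarith [e2]) hi
  have hμ : μ = μ' := le_antisymm hμ1 hμ2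
  exact hgen i i' hne hi.ne' hi'.ne' (by rw [h1, h1', hμ]; ring)

lemma entry_unique {n : ℕ} (lam alp : Fin (n+1) → ℝ)
    (hgen : ∀ i j, i ≠ j → alp i ≠ 0 → alp j ≠ 0 → lam i * alp j ≠ lam j * alp i)
    {i i' : Fin (n+1)} (hi : alp i < 0) (hi' : alp i' < 0)
    {μ μ' : ℝ}
    (h1 : lam i = μ * alp i) (h2 : ∀ j, μ * alp j ≤ lam j)
    (h1' : lam i' = μ' * alp i') (h2' : ∀ j, μ' * alp j ≤ lam j) :
    i = i' := by
  by_contra hne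
  have e1 : μ * alp i' ≤ μ' * alp i' := by rw [← h1']; exact h2 i'
  have e2 : μ' * alp i ≤ μ * alp i := by rw [← h1]; exact h2' i
  have hμ1 : μ' ≤ μ := by
    have := mul_le_mul_of_nonpos_right (le_refl (1:ℝ)) hi'.le
    nlinarith [e1]
  have hμ2 : μ ≤ μ' := by nlinarith [e2]
  have hμ : μ = μ' := le_antisymm hμ2 hμ1
  exact hgen i i' hne hi.ne hi'.ne (by rw [h1, h1', hμ]; ring)

open scoped Classical in
/-- The core combinatorial identity for crossing counts along the pencil of
constraints. -/
lemma core_sum {n : ℕ} (lam alp : Fin (n+1) → ℝ)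
    (halp : ∑ j, alp j = 1)
    (h0 : ∀ j, lam j ≠ 0)
    (hgen : ∀ i j, i ≠ j → alp i ≠ 0 → alp j ≠ 0 → lam i * alp j ≠ lam j * alp i) :
    ∑ i, Real.sign (alp i) *
        (if (∃ μ : ℝ, 0 ≤ μ ∧ lam i = μ * alp i ∧ ∀ j, μ * alp j ≤ lam j) then (1:ℝ) else 0)
      = if (∀ j, 0 ≤ lam j) then 1 else 0 := by
  classical
  set S : Fin (n+1) → Prop :=
    fun i => ∃ μ : ℝ, 0 ≤ μ ∧ lam i = μ * alp i ∧ ∀ j, μ * alp j ≤ lam j with hS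
  have hSalp : ∀ i, S i → alp i ≠ 0 := by
    rintro i ⟨μ, _, h1, _⟩ h
    exact h0 i (by rw [h1, h, mul_zero])
  by_cases hpos : ∀ j, 0 ≤ lam j
  · -- all coordinates positive : exactly one exit, no entry
    obtain ⟨istar, histar, μs, hμs0, hμs1, hμs2⟩ :=
      exit_exists lam alp halp 0 le_rfl (by intro j; simpa using hpos j)
    have hSstar : S istar := ⟨μs, hμs0, hμs1, hμs2⟩
    have hnoneg : ∀ i, S i → ¬ alp i < 0 := by
      rintro i ⟨μ, hμ0, h1, _⟩ hneg
      have : lam i ≤ 0 := by nlinarith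
      have : lam i < 0 := lt_of_le_of_ne this (h0 i)
      linarith [hpos i]
    have hterm : ∀ i : Fin (n+1), Real.sign (alp i) *
        (if S i then (1:ℝ) else 0) = if i = istar then 1 else 0 := by
      intro i
      by_cases hSi : S i
      · have halpi := hSalp i hSi
        have hposi : 0 < alp i := lt_of_le_of_ne (not_lt.mp (hnoneg i hSi)) (Ne.symm halpi)
        obtain ⟨μ, hμ0, h1, h2⟩ := id hSi
        have hieq : i = istar := exit_unique lam alp hgen hposi histar h1 h2 hμs1 hμs2
        subst hieq
        rw [if_pos hSi, mul_one, if_pos rfl, Real.sign_of_pos hposi]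
      · have hne : i ≠ istar := by rintro rfl; exact hSi hSstar
        rw [if_neg hSi, mul_zero, if_neg hne]
    rw [Finset.sum_congr rfl fun i _ => hterm i]
    simp [hpos]
  · -- some coordinate negative : exits and entries pair up
    have hRHS : (if (∀ j, 0 ≤ lam j) then (1:ℝ) else 0) = 0 := if_neg hpos
    rw [hRHS]
    push_neg at hpos
    obtain ⟨j₀, hj₀⟩ := hpos
    by_cases hE : ∃ i, S i
    · obtain ⟨i₁, hi₁⟩ := hE
      obtain ⟨μ₁, hμ₁0, hμ₁1, hμ₁2⟩ := hi₁
      obtain ⟨ip, hip, μp, hμp0, hμp1, hμp2⟩ :=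
        exit_exists lam alp halp μ₁ hμ₁0 hμ₁2
      obtain ⟨im, him, μm, hμm0, hμm1, hμm2⟩ :=
        entry_exists lam alp h0 j₀ hj₀ μp hμp0 hμp2
      have hSp : S ip := ⟨μp, hμp0, hμp1, hμp2⟩
      have hSm : S im := ⟨μm, hμm0, hμm1, hμm2⟩
      have hne : ip ≠ im := by
        rintro rfl; exact absurd hip (not_lt.mpr him.le)
      have hterm : ∀ i : Fin (n+1), Real.sign (alp i) *
          (if S i then (1:ℝ) else 0)
            = (if i = ip then 1 else 0) + (if i = im then (-1:ℝ) else 0) := by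
        intro i
        by_cases hSi : S i
        · have halpi := hSalp i hSi
          obtain ⟨μ, hμ0, h1, h2⟩ := id hSi
          rcases lt_or_gt_of_ne halpi with hneg | hpos'
          · have hieq : i = im := entry_unique lam alp hgen hneg him h1 h2 hμm1 hμm2
            subst hieq
            rw [if_pos hSi, mul_one, if_neg (fun h => hne h.symm), if_pos rfl,
              Real.sign_of_neg hneg]
            ring
          · have hieq : i = ip := exit_unique lam alp hgen hpos' hip h1 h2 hμp1 hμp2
            subst hieq
            rw [if_pos hSi, mul_one, if_pos rfl, if_neg hne, Real.sign_of_pos hpos']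
            ring
        · have h1 : i ≠ ip := by rintro rfl; exact hSi hSp
          have h2 : i ≠ im := by rintro rfl; exact hSi hSm
          rw [if_neg hSi, mul_zero, if_neg h1, if_neg h2]
          ring
      rw [Finset.sum_congr rfl fun i _ => hterm i, Finset.sum_add_distrib]
      simp [hne]
    · push_neg at hE
      have hterm : ∀ i : Fin (n+1), Real.sign (alp i) * (if S i then (1:ℝ) else 0) = 0 := by
        intro i; rw [if_neg (hE i), mul_zero]
      rw [Finset.sum_congr rfl fun i _ => hterm i]
      simp


open MeasureTheory

lemma null_affine_zero_set {n : ℕ} (φ : (Fin n → ℝ) →ᵃ[ℝ] ℝ) (p : Fin n → ℝ)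
    (hp : φ p ≠ 0) : volume {y | φ y = 0} = 0 := by
  by_cases hne : {y : Fin n → ℝ | φ y = 0} = ∅
  · rw [hne]; exact measure_empty
  · obtain ⟨y₀, hy₀⟩ := Set.nonempty_iff_ne_empty.mpr hne
    have hy₀' : φ y₀ = 0 := hy₀
    have hset : {y : Fin n → ℝ | φ y = 0}
        = ↑(AffineSubspace.mk' y₀ (LinearMap.ker φ.linear)) := by
      ext y
      simp only [Set.mem_setOf_eq, SetLike.mem_coe, AffineSubspace.mem_mk',
        LinearMap.mem_ker]
      rw [AffineMap.linearMap_vsub, hy₀', vsub_eq_sub, sub_zero]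
    rw [hset]
    apply Measure.addHaar_affineSubspace
    intro htop
    apply hp
    have : p ∈ AffineSubspace.mk' y₀ (LinearMap.ker φ.linear) := by
      rw [htop]; trivial
    rw [AffineSubspace.mem_mk', LinearMap.mem_ker,
      AffineMap.linearMap_vsub, hy₀'] at this
    simpa using this


/-- The matrix `B_i` whose columns are the vectors `v_j = x_j − a` for `j ≠ i`,
in increasing order of `j`. -/
noncomputable def coneMatrix (n : ℕ) (x : Fin (n + 1) → (Fin n → ℝ)) (a : Fin n → ℝ)
    (i : Fin (n + 1)) : Matrix (Fin n) (Fin n) ℝ :=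
  Matrix.of fun r c => (x (i.succAbove c) - a) r

noncomputable def liftMat (n : ℕ) (p : Fin (n+1) → (Fin n → ℝ)) :
    Matrix (Fin (n+1)) (Fin (n+1)) ℝ :=
  Matrix.of fun r => Fin.cons 1 (p r)

lemma liftMat_det (n : ℕ) (p : Fin (n+1) → (Fin n → ℝ)) :
    (liftMat n p).det = (Matrix.of fun r c : Fin n => (p c.succ - p 0) r).det := by
  classical
  set A := liftMat n p with hA
  set B : Matrix (Fin (n+1)) (Fin (n+1)) ℝ :=
    Matrix.of (fun r c => if r = 0 then A 0 c else A r c - A 0 c) with hB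
  have h1 : A.det = B.det := by
    apply Matrix.det_eq_of_forall_row_eq_smul_add_const
      (fun r => if r = 0 then (0:ℝ) else 1) 0 (if_pos rfl)
    intro i j
    by_cases hi : i = 0 <;> simp [hB, hi]
  rw [h1, Matrix.det_succ_column_zero]
  have hB0 : ∀ i : Fin (n+1), B i 0 = if i = 0 then 1 else 0 := by
    intro i
    by_cases hi : i = 0 <;>
      simp [hB, hA, hi, liftMat, Fin.cons_zero]
  have hsum : ∀ i : Fin (n+1), i ≠ 0 →
      (-1:ℝ) ^ (i:ℕ) * B i 0 * (B.submatrix i.succAbove Fin.succ).det = 0 := by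
    intro i hi; rw [hB0, if_neg hi]; ring
  rw [Finset.sum_eq_single 0 (fun i _ hi => hsum i hi) (by simp)]
  rw [hB0, if_pos rfl]
  have hsub : B.submatrix (Fin.succAbove 0) Fin.succ
      = (Matrix.of fun r c : Fin n => (p c.succ - p 0) r).transpose := by
    ext r c
    simp [hB, hA, liftMat, Fin.succAbove_zero, Fin.cons_succ, Matrix.submatrix,
      Fin.succ_ne_zero]
  rw [hsub, Matrix.det_transpose]
  simp

lemma coneMatrix_det_lift (n : ℕ) (x : Fin (n+1) → (Fin n → ℝ)) (a : Fin n → ℝ)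
    (i : Fin (n+1)) :
    (coneMatrix n x a i).det = (liftMat n (Fin.cons a (fun c => x (i.succAbove c)))).det := by
  rw [liftMat_det]
  congr 1

lemma liftMat_cons_perm (n : ℕ) (x : Fin (n+1) → (Fin n → ℝ)) (i : Fin (n+1)) :
    (liftMat n (Fin.cons (x i) (fun c => x (i.succAbove c)))).det
      = (-1:ℝ) ^ (i:ℕ) * (liftMat n x).det := by
  classical
  have h0 : ((i.cycleRange)⁻¹ : Equiv.Perm (Fin (n+1))) 0 = i := by
    rw [Equiv.Perm.inv_def, Equiv.symm_apply_eq]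
    exact (Fin.cycleRange_self i).symm
  have hs : ∀ c : Fin n, ((i.cycleRange)⁻¹ : Equiv.Perm (Fin (n+1))) c.succ = i.succAbove c := by
    intro c
    rw [Equiv.Perm.inv_def, Equiv.symm_apply_eq]
    exact (Fin.cycleRange_succAbove i c).symm
  have hperm : (Fin.cons (x i) (fun c => x (i.succAbove c)) : Fin (n+1) → (Fin n → ℝ))
      = fun k => x (((i.cycleRange)⁻¹ : Equiv.Perm (Fin (n+1))) k) := by
    funext k
    refine Fin.cases ?_ (fun c => ?_) k
    · rw [Fin.cons_zero, h0]
    · rw [Fin.cons_succ, hs]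
  have hM : liftMat n (Fin.cons (x i) (fun c => x (i.succAbove c)))
      = (liftMat n x).submatrix (⇑((i.cycleRange)⁻¹ : Equiv.Perm (Fin (n+1)))) id := by
    ext r c
    rw [hperm]
    simp [liftMat, Matrix.submatrix]
  rw [hM, Matrix.det_permute]
  congr 1
  have hsgn : Equiv.Perm.sign ((i.cycleRange)⁻¹ : Equiv.Perm (Fin (n+1))) = (-1) ^ (i:ℕ) := by
    rw [Equiv.Perm.sign_inv, Fin.sign_cycleRange]
  rw [hsgn]
  push_cast
  simp

lemma liftMat_cons_degenerate (n : ℕ) (x : Fin (n+1) → (Fin n → ℝ)) (i j : Fin (n+1))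
    (hj : j ≠ i) :
    (liftMat n (Fin.cons (x j) (fun c => x (i.succAbove c)))).det = 0 := by
  obtain ⟨c, hc⟩ := Fin.exists_succAbove_eq hj
  apply Matrix.det_zero_of_row_eq (i := (0 : Fin (n+1))) (j := c.succ) (Fin.succ_ne_zero c).symm
  funext k
  show (Fin.cons (1:ℝ) (x j) : Fin (n+1) → ℝ) k
      = (Fin.cons (1:ℝ) (x (i.succAbove c)) : Fin (n+1) → ℝ) k
  rw [hc]

lemma liftMat_row (n : ℕ) (p : Fin (n+1) → (Fin n → ℝ)) :
    (liftMat n p : Fin (n+1) → (Fin (n+1) → ℝ)) = fun r => Fin.cons 1 (p r) := rfl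

lemma coneMatrix_det_eq (n : ℕ) (x : Fin (n+1) → (Fin n → ℝ)) (a : Fin n → ℝ)
    (α : Fin (n+1) → ℝ) (hsum : ∑ j, α j = 1) (ha : ∀ r, a r = ∑ j, α j * x j r)
    (i : Fin (n+1)) :
    (coneMatrix n x a i).det
      = (-1:ℝ) ^ (i:ℕ) * α i * (Matrix.of fun r c : Fin n => (x c.succ - x 0) r).det := by
  classical
  rw [coneMatrix_det_lift]
  have hrow : (Fin.cons (1:ℝ) a : Fin (n+1) → ℝ)
      = ∑ j, α j • (Fin.cons (1:ℝ) (x j) : Fin (n+1) → ℝ) := by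
    funext k
    refine Fin.cases ?_ (fun c => ?_) k
    · simp only [Fin.cons_zero, Finset.sum_apply, Pi.smul_apply, smul_eq_mul, mul_one]
      exact hsum.symm
    · simp only [Fin.cons_succ, Finset.sum_apply, Pi.smul_apply, smul_eq_mul]
      exact ha c
  have hupdate : (liftMat n (Fin.cons a (fun c => x (i.succAbove c))) :
        Fin (n+1) → (Fin (n+1) → ℝ))
      = Function.update (liftMat n (Fin.cons a (fun c => x (i.succAbove c))) :
        Fin (n+1) → (Fin (n+1) → ℝ)) 0 (∑ j, α j • (Fin.cons (1:ℝ) (x j) : Fin (n+1) → ℝ)) := by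
    rw [← hrow]
    funext r
    by_cases hr : r = 0
    · subst hr
      erw [Function.update_self]
      rfl
    · erw [Function.update_of_ne hr]
  have hcongr : ∀ j : Fin (n+1),
      Function.update (liftMat n (Fin.cons a (fun c => x (i.succAbove c))) :
        Fin (n+1) → (Fin (n+1) → ℝ)) 0 (Fin.cons (1:ℝ) (x j))
      = (liftMat n (Fin.cons (x j) (fun c => x (i.succAbove c))) :
        Fin (n+1) → (Fin (n+1) → ℝ)) := by
    intro j
    funext r
    by_cases hr : r = 0
    · subst hr
      erw [Function.update_self]
      rfl
    · erw [Function.update_of_ne hr]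
      obtain ⟨c, rfl⟩ := Fin.eq_succ_of_ne_zero hr
      rfl
  have hdet : (liftMat n (Fin.cons a (fun c => x (i.succAbove c)))).det
      = ∑ j, α j * (liftMat n (Fin.cons (x j) (fun c => x (i.succAbove c)))).det := by
    show Matrix.detRowAlternating _ = _
    conv_lhs => rw [hupdate]
    erw [AlternatingMap.map_update_sum]
    apply Finset.sum_congr rfl
    intro j _
    erw [AlternatingMap.map_update_smul, hcongr j]
    rfl
  rw [hdet, Finset.sum_eq_single i]
  · rw [liftMat_cons_perm, ← liftMat_det]
    ring
  · intro j _ hj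
    rw [liftMat_cons_degenerate n x i j hj, mul_zero]
  · intro h
    exact absurd (Finset.mem_univ i) h


open Finset

variable {n : ℕ} (b : AffineBasis (Fin (n+1)) ℝ (Fin n → ℝ)) (a : Fin n → ℝ) (i : Fin (n+1))

lemma coord_affineCombination_cons (w : Fin (n+1) → ℝ) (hw : ∑ k, w k = 1) (j : Fin (n+1)) :
    b.coord j (Finset.univ.affineCombination ℝ
        (Fin.cons a (fun c => b (i.succAbove c)) : Fin (n+1) → (Fin n → ℝ)) w)
      = w 0 * b.coord j a
        + ∑ c : Fin n, w c.succ * (if j = i.succAbove c then 1 else 0) := by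
  classical
  set g : Fin (n+1) → (Fin n → ℝ) := Fin.cons a (fun c => b (i.succAbove c)) with hg
  rw [show (b.coord j) (Finset.univ.affineCombination ℝ g w)
      = Finset.univ.affineCombination ℝ (⇑(b.coord j) ∘ g) w from
    Finset.map_affineCombination Finset.univ g w hw (b.coord j)]
  rw [Finset.univ.affineCombination_eq_linear_combination _ _ hw]
  rw [Fin.sum_univ_succ]
  simp only [Function.comp_apply, hg, Fin.cons_zero, Fin.cons_succ, smul_eq_mul]
  congr 1
  apply Finset.sum_congr rfl
  intro c _
  rw [AffineBasis.coord_apply]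

lemma mem_coneHull_iff (y : Fin n → ℝ) :
    y ∈ convexHull ℝ (insert a (Set.range fun c : Fin n => b (i.succAbove c)))
      ↔ ∃ μ : ℝ, 0 ≤ μ ∧ b.coord i y = μ * b.coord i a
          ∧ ∀ j, μ * b.coord j a ≤ b.coord j y := by
  classical
  set g : Fin (n+1) → (Fin n → ℝ) := Fin.cons a (fun c => b (i.succAbove c)) with hg
  have hrange : insert a (Set.range fun c : Fin n => b (i.succAbove c)) = Set.range g := by
    rw [hg, Fin.range_cons]
  rw [hrange, convexHull_range_eq_exists_affineCombination, Set.mem_setOf_eq]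
  constructor
  · rintro ⟨s, w, hw0, hw1, hy⟩
    set w' : Fin (n+1) → ℝ := fun k => if k ∈ s then w k else 0 with hw'
    have hw'0 : ∀ k, 0 ≤ w' k := by
      intro k
      by_cases hk : k ∈ s <;> simp [hw', hk]
      exact hw0 k hk
    have hw'1 : ∑ k, w' k = 1 := by
      rw [hw', Finset.sum_ite_mem, Finset.univ_inter, hw1]
    have hy' : Finset.univ.affineCombination ℝ g w' = y := by
      rw [show w' = Set.indicator ↑s w by
        funext k
        by_cases hk : k ∈ s <;> simp [hw', Set.indicator, hk]]
      rw [← Finset.affineCombination_indicator_subset w g s.subset_univ]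
      exact hy
    have hcoord := fun j => coord_affineCombination_cons b a i w' hw'1 j
    rw [hy'] at hcoord
    refine ⟨w' 0, hw'0 0, ?_, ?_⟩
    · rw [hcoord i]
      have : ∀ c : Fin n, w' c.succ * (if i = i.succAbove c then 1 else 0) = 0 := by
        intro c
        rw [if_neg (Fin.ne_succAbove i c), mul_zero]
      rw [Finset.sum_congr rfl fun c _ => this c]
      simp
    · intro j
      rw [hcoord j]
      have : 0 ≤ ∑ c : Fin n, w' c.succ * (if j = i.succAbove c then 1 else 0) := by
        apply Finset.sum_nonneg
        intro c _
        apply mul_nonneg (hw'0 _)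
        split <;> norm_num
      linarith
  · rintro ⟨μ, hμ0, hμi, hμle⟩
    set w : Fin (n+1) → ℝ :=
      Fin.cons μ (fun c => b.coord (i.succAbove c) y - μ * b.coord (i.succAbove c) a) with hwdef
    have hw0 : ∀ k, 0 ≤ w k := by
      intro k
      refine Fin.cases ?_ (fun c => ?_) k
      · simpa [hwdef] using hμ0
      · simp only [hwdef, Fin.cons_succ]
        linarith [hμle (i.succAbove c)]
    have hsum_y : ∑ c : Fin n, b.coord (i.succAbove c) y = 1 - b.coord i y := by
      have := b.sum_coord_apply_eq_one y
      rw [Fin.sum_univ_succAbove (fun j => b.coord j y) i] at this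
      linarith
    have hsum_a : ∑ c : Fin n, b.coord (i.succAbove c) a = 1 - b.coord i a := by
      have := b.sum_coord_apply_eq_one a
      rw [Fin.sum_univ_succAbove (fun j => b.coord j a) i] at this
      linarith
    have hw1 : ∑ k, w k = 1 := by
      rw [Fin.sum_univ_succ]
      simp only [hwdef, Fin.cons_zero, Fin.cons_succ]
      rw [Finset.sum_sub_distrib, ← Finset.mul_sum, hsum_y, hsum_a]
      nlinarith [hμi]
    refine ⟨Finset.univ, w, fun k _ => hw0 k, hw1, ?_⟩
    apply b.ext_elem
    intro j
    rw [coord_affineCombination_cons b a i w hw1 j]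
    by_cases hj : j = i
    · subst hj
      have : ∀ c : Fin n, w c.succ * (if j = j.succAbove c then 1 else 0) = 0 := by
        intro c
        rw [if_neg (Fin.ne_succAbove j c), mul_zero]
      rw [Finset.sum_congr rfl fun c _ => this c]
      simp only [hwdef, Fin.cons_zero, Finset.sum_const_zero, add_zero]
      exact hμi.symm
    · obtain ⟨c₀, hc₀⟩ := Fin.exists_succAbove_eq hj
      have hsingle : ∑ c : Fin n, w c.succ * (if j = i.succAbove c then 1 else 0)
          = w c₀.succ := by
        rw [Finset.sum_eq_single c₀]
        · rw [if_pos hc₀.symm, mul_one]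
        · intro c _ hc
          rw [if_neg, mul_zero]
          rw [← hc₀]
          intro h
          exact hc (Fin.succAbove_right_injective h.symm)
        · intro h
          exact absurd (Finset.mem_univ c₀) h
      rw [hsingle]
      simp only [hwdef, Fin.cons_zero, Fin.cons_succ, hc₀]
      ring

end Aux

/-- for a positively oriented simplex `T = [x_0,…,x_n]` and any apex
`a`, the signed sum of the integrals of an integrable function over the simplicial
cones `T_i = [a, x_0,…,x̂_i,…,x_n]` equals the integral over `T`. -/
theorem stmt14 (n : ℕ) (x : Fin (n + 1) → (Fin n → ℝ)) (a : Fin n → ℝ)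
    (hdet : 0 < (Matrix.of fun r c : Fin n => (x c.succ - x 0) r).det)
    (f : (Fin n → ℝ) → ℝ) (hf : Integrable f) :
    ∑ i : Fin (n + 1),
        (-1 : ℝ) ^ (i : ℕ) * Real.sign (coneMatrix n x a i).det
          * ∫ y in convexHull ℝ (insert a (Set.range fun c : Fin n => x (i.succAbove c))), f y
      = ∫ y in convexHull ℝ (Set.range x), f y := by
  classical
  have hdetne : (Matrix.of fun r c : Fin n => (x c.succ - x 0) r).det ≠ 0 := ne_of_gt hdet
  have hunit : IsUnit (Matrix.of fun r c : Fin n => (x c.succ - x 0) r) :=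
    (Matrix.isUnit_iff_isUnit_det _).mpr (isUnit_iff_ne_zero.mpr hdetne)
  have hLI : LinearIndependent ℝ (fun c : Fin n => x c.succ - x 0) :=
    Matrix.linearIndependent_cols_iff_isUnit.mpr hunit
  have haff : AffineIndependent ℝ x := by
    rw [affineIndependent_iff_linearIndependent_vsub ℝ x 0]
    have hinj : Function.Injective
        (fun j : {j : Fin (n+1) // j ≠ 0} => (j : Fin (n+1)).pred j.2) := by
      intro j j' h
      apply Subtype.ext
      rwa [Fin.pred_inj] at h
    have h2 := hLI.comp _ hinj
    have he : (fun j : {j : Fin (n+1) // j ≠ 0} => x ↑j -ᵥ x 0)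
        = ((fun c : Fin n => x c.succ - x 0) ∘
            (fun j : {j : Fin (n+1) // j ≠ 0} => (j : Fin (n+1)).pred j.2)) := by
      funext j
      simp [Function.comp, Fin.succ_pred, vsub_eq_sub]
    rw [he]
    exact h2
  have htop : affineSpan ℝ (Set.range x) = ⊤ := by
    rw [haff.affineSpan_eq_top_iff_card_eq_finrank_add_one]
    simp [Module.finrank_pi]
  let b : AffineBasis (Fin (n+1)) ℝ (Fin n → ℝ) := ⟨x, haff, htop⟩
  have hcoordx : ∀ j : Fin (n+1), b.coord j (x j) = 1 := by
    intro j
    have h := b.coord_apply j j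
    rw [if_pos rfl] at h
    exact h
  have hcoordx' : ∀ j k : Fin (n+1), j ≠ k → b.coord j (x k) = 0 := by
    intro j k hjk
    have h := b.coord_apply j k
    rw [if_neg hjk] at h
    exact h
  set α : Fin (n+1) → ℝ := fun j => b.coord j a with hα
  have hαsum : ∑ j, α j = 1 := b.sum_coord_apply_eq_one a
  have hacomb : ∀ r, a r = ∑ j, α j * x j r := by
    intro r
    have h1 := b.linear_combination_coord_eq_self a
    have h2 := congrFun h1 r
    rw [Finset.sum_apply] at h2
    have h3 := h2.symm
    simp only [Pi.smul_apply, smul_eq_mul] at h3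
    exact h3
  have hdetcone : ∀ i, (coneMatrix n x a i).det
      = (-1:ℝ)^(i:ℕ) * α i * (Matrix.of fun r c : Fin n => (x c.succ - x 0) r).det :=
    fun i => coneMatrix_det_eq n x a α hαsum hacomb i
  have hsign : ∀ i : Fin (n+1),
      (-1:ℝ)^(i:ℕ) * Real.sign (coneMatrix n x a i).det = Real.sign (α i) := by
    intro i
    rw [hdetcone i, mul_assoc ((-1:ℝ)^(i:ℕ))]
    rcases Nat.even_or_odd (i:ℕ) with he | ho
    · rw [he.neg_one_pow, one_mul, one_mul]
      rcases lt_trichotomy (α i) 0 with h|h|h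
      · rw [Real.sign_of_neg (mul_neg_of_neg_of_pos h hdet), Real.sign_of_neg h]
      · rw [h, zero_mul, Real.sign_zero]
      · rw [Real.sign_of_pos (mul_pos h hdet), Real.sign_of_pos h]
    · rw [ho.neg_one_pow]
      rcases lt_trichotomy (α i) 0 with h|h|h
      · rw [Real.sign_of_pos (by nlinarith :
            (0:ℝ) < -1 * (α i * (Matrix.of fun r c : Fin n => (x c.succ - x 0) r).det)),
          Real.sign_of_neg h]
        norm_num
      · rw [h, zero_mul, mul_zero, Real.sign_zero]
        ring
      · rw [Real.sign_of_neg (by nlinarith :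
            -1 * (α i * (Matrix.of fun r c : Fin n => (x c.succ - x 0) r).det) < (0:ℝ)),
          Real.sign_of_pos h]
        norm_num
  have hTimeas : ∀ i : Fin (n+1), MeasurableSet
      (convexHull ℝ (insert a (Set.range fun c : Fin n => x (i.succAbove c)))) := by
    intro i
    exact (((Set.finite_range _).insert a).isCompact_convexHull ℝ).isClosed.measurableSet
  have hTmeas : MeasurableSet (convexHull ℝ (Set.range x)) :=
    ((Set.finite_range x).isCompact_convexHull ℝ).isClosed.measurableSet
  set N : Set (Fin n → ℝ) :=
    {y | ∃ j, b.coord j y = 0} ∪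
      {y | ∃ p : Fin (n+1) × Fin (n+1), p.1 ≠ p.2 ∧ α p.1 ≠ 0 ∧ α p.2 ≠ 0 ∧
        b.coord p.1 y * α p.2 = b.coord p.2 y * α p.1} with hN
  have hNnull : volume N = 0 := by
    rw [hN]
    apply measure_union_null
    · have h1 : {y : Fin n → ℝ | ∃ j, b.coord j y = 0}
          = ⋃ j, {y : Fin n → ℝ | b.coord j y = 0} := by
        ext y; simp
      rw [h1]
      apply measure_iUnion_null
      intro j
      apply null_affine_zero_set (b.coord j) (x j)
      rw [hcoordx j]
      norm_num
    · have h2 : {y : Fin n → ℝ | ∃ p : Fin (n+1) × Fin (n+1), p.1 ≠ p.2 ∧ α p.1 ≠ 0 ∧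
          α p.2 ≠ 0 ∧ b.coord p.1 y * α p.2 = b.coord p.2 y * α p.1}
          = ⋃ p : Fin (n+1) × Fin (n+1), {y : Fin n → ℝ | p.1 ≠ p.2 ∧ α p.1 ≠ 0 ∧
            α p.2 ≠ 0 ∧ b.coord p.1 y * α p.2 = b.coord p.2 y * α p.1} := by
        ext y; simp
      rw [h2]
      apply measure_iUnion_null
      intro p
      by_cases hp : p.1 ≠ p.2 ∧ α p.1 ≠ 0 ∧ α p.2 ≠ 0
      · obtain ⟨hp1, hp2, hp3⟩ := hp
        refine measure_mono_null (t := {y : Fin n → ℝ |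
            (α p.2 • b.coord p.1 - α p.1 • b.coord p.2 : (Fin n → ℝ) →ᵃ[ℝ] ℝ) y = 0}) ?_ ?_
        · intro y hy
          obtain ⟨-, -, -, he⟩ := hy
          simp only [Set.mem_setOf_eq, AffineMap.coe_sub, AffineMap.coe_smul, Pi.sub_apply,
            Pi.smul_apply, smul_eq_mul]
          linarith [he]
        · apply null_affine_zero_set _ (x p.1)
          simp only [AffineMap.coe_sub, AffineMap.coe_smul, Pi.sub_apply, Pi.smul_apply,
            smul_eq_mul]
          rw [hcoordx p.1, hcoordx' p.2 p.1 (Ne.symm hp1)]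
          simpa using hp3
      · have : {y : Fin n → ℝ | p.1 ≠ p.2 ∧ α p.1 ≠ 0 ∧
            α p.2 ≠ 0 ∧ b.coord p.1 y * α p.2 = b.coord p.2 y * α p.1} = ∅ := by
          ext y
          simp only [Set.mem_setOf_eq, Set.mem_empty_iff_false, iff_false]
          intro hy
          exact hp ⟨hy.1, hy.2.1, hy.2.2.1⟩
        rw [this]
        exact measure_empty
  have hmemTi : ∀ (i : Fin (n+1)) (y : Fin n → ℝ),
      (y ∈ convexHull ℝ (insert a (Set.range fun c : Fin n => x (i.succAbove c))))
        ↔ ∃ μ : ℝ, 0 ≤ μ ∧ b.coord i y = μ * α i ∧ ∀ j, μ * α j ≤ b.coord j y := by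
    intro i y
    exact mem_coneHull_iff b a i y
  have hmemT : ∀ y : Fin n → ℝ,
      (y ∈ convexHull ℝ (Set.range x)) ↔ ∀ j, 0 ≤ b.coord j y := by
    intro y
    rw [show Set.range x = Set.range ⇑b from rfl, b.convexHull_eq_nonneg_coord]
    exact Iff.rfl
  have hpt : ∀ y : Fin n → ℝ, y ∉ N →
      (∑ i : Fin (n+1), (-1:ℝ)^(i:ℕ) * Real.sign (coneMatrix n x a i).det *
        (if y ∈ convexHull ℝ (insert a (Set.range fun c : Fin n => x (i.succAbove c)))
          then (1:ℝ) else 0))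
      = (if y ∈ convexHull ℝ (Set.range x) then (1:ℝ) else 0) := by
    intro y hy
    rw [hN] at hy
    have hy1 : ∀ j, b.coord j y ≠ 0 := by
      intro j hj
      exact hy (Or.inl ⟨j, hj⟩)
    have hy2 : ∀ i j, i ≠ j → α i ≠ 0 → α j ≠ 0 →
        b.coord i y * α j ≠ b.coord j y * α i := by
      intro i j h1 h2 h3 he
      exact hy (Or.inr ⟨⟨i, j⟩, h1, h2, h3, he⟩)
    have hcalc := core_sum (fun j => b.coord j y) α hαsum hy1 hy2
    have hstep : (∑ i : Fin (n+1), (-1:ℝ)^(i:ℕ) * Real.sign (coneMatrix n x a i).det *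
        (if y ∈ convexHull ℝ (insert a (Set.range fun c : Fin n => x (i.succAbove c)))
          then (1:ℝ) else 0))
        = ∑ i : Fin (n+1), Real.sign (α i) *
            (if (∃ μ : ℝ, 0 ≤ μ ∧ b.coord i y = μ * α i ∧ ∀ j, μ * α j ≤ b.coord j y)
              then (1:ℝ) else 0) := by
      apply Finset.sum_congr rfl
      intro i _
      rw [hsign i]
      congr 1
      by_cases h : y ∈ convexHull ℝ (insert a (Set.range fun c : Fin n => x (i.succAbove c)))
      · rw [if_pos h, if_pos ((hmemTi i y).mp h)]
      · rw [if_neg h, if_neg (fun hc => h ((hmemTi i y).mpr hc))]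
    rw [hstep]
    rw [hcalc]
    by_cases h : y ∈ convexHull ℝ (Set.range x)
    · rw [if_pos h, if_pos (fun j => ((hmemT y).mp h) j)]
    · rw [if_neg h, if_neg (fun hc => h ((hmemT y).mpr hc))]
  -- integration
  have hintTi : ∀ i : Fin (n+1), Integrable (fun y =>
      (-1:ℝ)^(i:ℕ) * Real.sign (coneMatrix n x a i).det *
        (Set.indicator (convexHull ℝ (insert a (Set.range fun c : Fin n => x (i.succAbove c))))
          f y)) volume :=
    fun i => (hf.indicator (hTimeas i)).const_mul _
  calc
    ∑ i : Fin (n + 1),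
        (-1 : ℝ) ^ (i : ℕ) * Real.sign (coneMatrix n x a i).det
          * ∫ y in convexHull ℝ (insert a (Set.range fun c : Fin n => x (i.succAbove c))), f y
      = ∑ i : Fin (n+1), ∫ y, (-1:ℝ)^(i:ℕ) * Real.sign (coneMatrix n x a i).det *
          (Set.indicator (convexHull ℝ (insert a (Set.range fun c : Fin n => x (i.succAbove c))))
            f y) := by
        apply Finset.sum_congr rfl
        intro i _
        rw [← integral_indicator (hTimeas i), ← integral_const_mul]
    _ = ∫ y, ∑ i : Fin (n+1), (-1:ℝ)^(i:ℕ) * Real.sign (coneMatrix n x a i).det *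
          (Set.indicator (convexHull ℝ (insert a (Set.range fun c : Fin n => x (i.succAbove c))))
            f y) := (integral_finset_sum Finset.univ (fun i _ => hintTi i)).symm
    _ = ∫ y, Set.indicator (convexHull ℝ (Set.range x)) f y := by
        apply integral_congr_ae
        have hae : ∀ᵐ y : Fin n → ℝ, y ∉ N := measure_eq_zero_iff_ae_notMem.mp hNnull
        filter_upwards [hae] with y hy
        have hterm : ∀ i : Fin (n+1), (-1:ℝ)^(i:ℕ) * Real.sign (coneMatrix n x a i).det *
            (Set.indicator (convexHull ℝ (insert a
              (Set.range fun c : Fin n => x (i.succAbove c)))) f y)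
            = ((-1:ℝ)^(i:ℕ) * Real.sign (coneMatrix n x a i).det *
              (if y ∈ convexHull ℝ (insert a (Set.range fun c : Fin n => x (i.succAbove c)))
                then (1:ℝ) else 0)) * f y := by
          intro i
          rw [Set.indicator_apply]
          by_cases h : y ∈ convexHull ℝ (insert a (Set.range fun c : Fin n => x (i.succAbove c)))
          · rw [if_pos h, if_pos h]; ring
          · rw [if_neg h, if_neg h]; ring
        rw [Finset.sum_congr rfl (fun i _ => hterm i), ← Finset.sum_mul, hpt y hy,
          Set.indicator_apply]
        by_cases h : y ∈ convexHull ℝ (Set.range x)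
        · rw [if_pos h, if_pos h]; ring
        · rw [if_neg h, if_neg h]; ring
    _ = ∫ y in convexHull ℝ (Set.range x), f y := integral_indicator hTmeas
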